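/- Let k₁ > 0, k₂ > 0, λ > 0, τ ≥ 0, and suppose ω > 0 is a real number such that s = iω is a root of s² + λ(k₂ s + k₁)e^{−τ s} = 0. Then ω satisfies ω⁴ = λ²(k₂²ω² + k₁²), and therefore ω = sqrt((k₂²λ² + sqrt(k₂⁴λ⁴ + 4k₁²λ²))/2). -/

import Mathlib

/-- For the consensus protocol with self-delay: if `iω` (with `ω > 0`) is a root
of `s² + λ(k₂ s + k₁)e^{−τ s}` for some delay `τ ≥ 0`, then `ω` satisfies the
magnitude condition `ω⁴ = λ²(k₂²ω² + k₁²)`, and hence equals the crossing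
frequency formula. -/
theorem crossing_frequency_selfDelay (k₁ k₂ l τ ω : ℝ) (hk₁ : 0 < k₁) (hk₂ : 0 < k₂)
    (hl : 0 < l) (hτ : 0 ≤ τ) (hω : 0 < ω)
    (hroot : (Complex.I * ω) ^ 2
      + (l : ℂ) * ((k₂ : ℂ) * (Complex.I * ω) + (k₁ : ℂ))
        * Complex.exp (-(τ : ℂ) * (Complex.I * ω)) = 0) :
    ω ^ 4 = l ^ 2 * (k₂ ^ 2 * ω ^ 2 + k₁ ^ 2) ∧
      ω = Real.sqrt ((k₂ ^ 2 * l ^ 2 + Real.sqrt (k₂ ^ 4 * l ^ 4 + 4 * k₁ ^ 2 * l ^ 2)) / 2) := by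
  have heq : (l : ℂ) * ((k₂ : ℂ) * (Complex.I * ω) + (k₁ : ℂ))
      * Complex.exp (-(τ : ℂ) * (Complex.I * ω)) = (ω : ℂ) ^ 2 := by
    have : (Complex.I * ω) ^ 2 = -(ω : ℂ) ^ 2 := by
      rw [mul_pow, Complex.I_sq]; ring
    rw [this] at hroot; linear_combination hroot
  have habs := congrArg (‖·‖) heq
  rw [norm_mul, norm_mul] at habs
  have hexp : ‖(Complex.exp (-(τ : ℂ) * (Complex.I * ω)))‖ = 1 := by
    rw [Complex.norm_exp]
    have : (-(τ : ℂ) * (Complex.I * ω)).re = 0 := by simp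
    rw [this, Real.exp_zero]
  have habs1 : ‖((k₂ : ℂ) * (Complex.I * ω) + (k₁ : ℂ))‖
      = Real.sqrt (k₂ ^ 2 * ω ^ 2 + k₁ ^ 2) := by
    rw [Complex.norm_def, Complex.normSq_apply]
    congr 1
    simp [Complex.add_re, Complex.add_im, Complex.mul_re, Complex.mul_im]
    ring
  have habsl : ‖(l : ℂ)‖ = l := by
    rw [Complex.norm_real, Real.norm_eq_abs, abs_of_pos hl]
  have habsω : ‖((ω : ℂ) ^ 2)‖ = ω ^ 2 := by
    rw [norm_pow, Complex.norm_real, Real.norm_eq_abs, abs_of_pos hω]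
  rw [hexp, habs1, habsl, habsω, mul_one] at habs
  have hsq : ω ^ 4 = l ^ 2 * (k₂ ^ 2 * ω ^ 2 + k₁ ^ 2) := by
    have h2 : (ω ^ 2) ^ 2 = (l * Real.sqrt (k₂ ^ 2 * ω ^ 2 + k₁ ^ 2)) ^ 2 := by
      rw [habs]
    have hnn : 0 ≤ k₂ ^ 2 * ω ^ 2 + k₁ ^ 2 := by positivity
    rw [mul_pow, Real.sq_sqrt hnn] at h2
    linarith [h2]
  refine ⟨hsq, ?_⟩
  set A := k₂ ^ 2 * l ^ 2 with hA
  set D := Real.sqrt (k₂ ^ 4 * l ^ 4 + 4 * k₁ ^ 2 * l ^ 2) with hD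
  have hDsq : D ^ 2 = k₂ ^ 4 * l ^ 4 + 4 * k₁ ^ 2 * l ^ 2 := Real.sq_sqrt (by positivity)
  have hDpos : 0 < D := Real.sqrt_pos.mpr (by positivity)
  have hω2 : ω ^ 2 = (A + D) / 2 := by
    -- ω⁴ - Aω² - k₁²l² = 0, and (A+D)/2, (A-D)/2 are the roots
    have key : (ω ^ 2 - (A + D) / 2) * (ω ^ 2 - (A - D) / 2) = 0 := by
      have : (ω ^ 2 - (A + D) / 2) * (ω ^ 2 - (A - D) / 2)
          = ω ^ 4 - A * ω ^ 2 + (A ^ 2 - D ^ 2) / 4 := by ring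
      rw [this, hDsq, hA]
      nlinarith [hsq]
    rcases mul_eq_zero.mp key with h | h
    · linarith
    · exfalso
      have hDgt : A < D := by
        have : A ^ 2 < D ^ 2 := by rw [hDsq, hA]; nlinarith [mul_pos (pow_pos hk₁ 2) (pow_pos hl 2)]
        nlinarith
      nlinarith [sq_nonneg ω, hω]
  rw [← hω2, Real.sqrt_sq hω.le]
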